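/- Let ũ ∈ 𝓢(ℝ,ℂ) and let u be its restriction to (0,∞). Then: (i) for every s with Re s > 0 the integral defining mellin u s converges absolutely, and s ↦ mellin u s is complex-differentiable on {Re s > 0}; (ii) there exists F : ℂ → ℂ, complex-differentiable on ℂ \ {−j : j ∈ ℕ}, with F(s) = mellin u s whenever Re s > 0, such that for every j ∈ ℕ the function s ↦ F(s) − (ũ^{(j)}(0)/j!)·(s + j)^{-1} extends to a complex-differentiable function on a neighborhood of −j (i.e. F has at most a simple pole at −j with residue ũ^{(j)}(0)/j!); (iii) for every c > 0 and every m ∈ ℕ, sup_{η ∈ ℝ} (1+|η|)^m · |mellin u (c + i·η)| < ∞. -/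

import Mathlib

open MeasureTheory Complex

namespace MellinPW

open Set Filter Asymptotics SchwartzMap
open scoped Topology

lemma schwartz_isBigO_atTop (v : SchwartzMap ℝ ℂ) (a : ℝ) :
    (fun t : ℝ => v t) =O[atTop] (fun x : ℝ => x ^ (-a)) := by
  have h := v.isBigO_cocompact_rpow (-a)
  have h2 : (fun t : ℝ => v t) =O[atTop] (fun x : ℝ => ‖x‖ ^ (-a)) :=
    h.mono atTop_le_cocompact
  refine h2.congr' EventuallyEq.rfl ?_
  filter_upwards [eventually_ge_atTop (0:ℝ)] with x hx
  rw [Real.norm_of_nonneg hx]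

lemma schwartz_isBigO_zero (v : SchwartzMap ℝ ℂ) :
    (fun t : ℝ => v t) =O[𝓝[>] (0:ℝ)] (fun x : ℝ => x ^ (-(0:ℝ))) := by
  have : Tendsto (fun t : ℝ => v t) (𝓝[>] 0) (𝓝 (v 0)) :=
    (v.continuous.continuousAt.continuousWithinAt).tendsto
  simpa using this.isBigO_one ℝ

lemma mellinIntegrable (v : SchwartzMap ℝ ℂ) (s : ℂ) (hs : 0 < s.re) :
    IntegrableOn (fun t : ℝ => (t : ℂ) ^ (s - 1) * v t) (Set.Ioi (0 : ℝ)) := by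
  have h := mellinConvergent_of_isBigO_rpow (a := s.re + 1) (b := 0)
    (f := fun t : ℝ => v t) (s := s)
    ((v.continuous.locallyIntegrable).locallyIntegrableOn _)
    (schwartz_isBigO_atTop v _) (by linarith) (schwartz_isBigO_zero v) hs
  simpa [MellinConvergent, smul_eq_mul] using h

lemma mellinDiff (v : SchwartzMap ℝ ℂ) (s : ℂ) (hs : 0 < s.re) :
    DifferentiableAt ℂ (mellin (fun t : ℝ => v t)) s :=
  mellin_differentiableAt_of_isBigO_rpow (a := s.re + 1) (b := 0)
    ((v.continuous.locallyIntegrable).locallyIntegrableOn _)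
    (schwartz_isBigO_atTop v _) (by linarith) (schwartz_isBigO_zero v) hs

lemma schwartz_bound (v : SchwartzMap ℝ ℂ) : ∃ C : ℝ, ∀ x : ℝ, ‖v x‖ ≤ C := by
  obtain ⟨C, _, hC⟩ := v.decay 0 0
  exact ⟨C, fun x => by simpa using hC x⟩

lemma tendsto_cpow_mul_atTop (v : SchwartzMap ℝ ℂ) (s : ℂ) :
    Tendsto (fun t : ℝ => (t : ℂ) ^ s * v t) atTop (𝓝 0) := by
  set k : ℕ := ⌈s.re⌉₊ + 1 with hk
  obtain ⟨C, _, hC⟩ := v.decay k 0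
  have hsk : s.re - k < 0 := by
    have : s.re ≤ ⌈s.re⌉₊ := Nat.le_ceil _
    have : s.re < k := by
      rw [hk]; push_cast; linarith
    linarith
  have hg : Tendsto (fun t : ℝ => C * t ^ (s.re - k)) atTop (𝓝 0) := by
    have := tendsto_rpow_neg_atTop (y := k - s.re) (by linarith)
    simpa [neg_sub, mul_zero] using this.const_mul C
  refine squeeze_zero_norm' ?_ hg
  filter_upwards [eventually_ge_atTop (1:ℝ)] with t ht
  have ht0 : (0:ℝ) < t := lt_of_lt_of_le one_pos ht
  have h1 : ‖(t : ℂ) ^ s * v t‖ = t ^ s.re * ‖v t‖ := by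
    rw [norm_mul, Complex.norm_cpow_eq_rpow_re_of_pos ht0]
  rw [h1]
  have h2 : t ^ s.re = t ^ (s.re - k) * t ^ (k:ℝ) := by
    rw [← Real.rpow_add ht0]; ring_nf
  have h3 : t ^ (k:ℝ) * ‖v t‖ ≤ C := by
    have := hC t
    simpa [Real.norm_of_nonneg ht0.le, Real.rpow_natCast] using this
  calc t ^ s.re * ‖v t‖ = t ^ (s.re - k) * (t ^ (k:ℝ) * ‖v t‖) := by rw [h2]; ring
    _ ≤ t ^ (s.re - k) * C := by
        have := Real.rpow_nonneg ht0.le (s.re - k)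
        exact mul_le_mul_of_nonneg_left h3 this
    _ = C * t ^ (s.re - k) := by ring

lemma tendsto_cpow_mul_zero (v : SchwartzMap ℝ ℂ) (s : ℂ) (hs : 0 < s.re) :
    Tendsto (fun t : ℝ => (t : ℂ) ^ s * v t) (𝓝[Set.Ici (0:ℝ)] 0) (𝓝 0) := by
  obtain ⟨C, hC⟩ := schwartz_bound v
  have hC0 : 0 ≤ C := le_trans (norm_nonneg _) (hC 0)
  have hg : Tendsto (fun t : ℝ => C * t ^ s.re) (𝓝[Set.Ici (0:ℝ)] 0) (𝓝 0) := by
    have h := (Real.continuousAt_rpow_const 0 s.re (Or.inr hs.le)).tendsto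
    rw [Real.zero_rpow hs.ne'] at h
    simpa using (h.mono_left nhdsWithin_le_nhds).const_mul C
  refine squeeze_zero_norm' ?_ hg
  filter_upwards [self_mem_nhdsWithin] with t (ht : (0:ℝ) ≤ t)
  rcases eq_or_lt_of_le ht with h | h
  · subst h
    have hne : s ≠ 0 := fun h0 => by simp [h0] at hs
    simp [Complex.ofReal_zero, Complex.zero_cpow hne, Real.zero_rpow hs.ne']
  · rw [norm_mul, Complex.norm_cpow_eq_rpow_re_of_pos h]
    calc t ^ s.re * ‖v t‖ ≤ t ^ s.re * C :=
          mul_le_mul_of_nonneg_left (hC t) (Real.rpow_nonneg ht _)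
      _ = C * t ^ s.re := by ring

lemma hasDerivAt_cpow_mul (v : SchwartzMap ℝ ℂ) (s : ℂ) {t : ℝ} (ht : 0 < t) :
    HasDerivAt (fun t : ℝ => (t : ℂ) ^ s * v t)
      (s * (t : ℂ) ^ (s - 1) * v t + (t : ℂ) ^ s * deriv (fun x : ℝ => v x) t) t := by
  have h1 : HasDerivAt (fun t : ℝ => (t : ℂ) ^ s) (s * (t : ℂ) ^ (s - 1)) t := by
    have := ((hasDerivAt_id ((t : ℝ) : ℂ)).cpow_const (c := s)
      (Or.inl (by simpa using ht))).comp_ofReal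
    simpa using this
  exact h1.mul (v.differentiableAt.hasDerivAt)

lemma mellin_deriv_eq (v : SchwartzMap ℝ ℂ) (s : ℂ) (hs : 0 < s.re) :
    mellin (fun t : ℝ => SchwartzMap.derivCLM ℝ ℂ v t) (s + 1)
      = -s * mellin (fun t : ℝ => v t) s := by
  have hs0 : s ≠ 0 := fun h => by simp [h] at hs
  have hint1 : IntegrableOn (fun t : ℝ => s * ((t : ℂ) ^ (s - 1) * v t)) (Set.Ioi (0:ℝ)) :=
    (mellinIntegrable v s hs).const_mul s
  have hint2 : IntegrableOn (fun t : ℝ => (t : ℂ) ^ s * deriv (fun x : ℝ => v x) t)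
      (Set.Ioi (0:ℝ)) := by
    have h := mellinIntegrable (SchwartzMap.derivCLM ℝ ℂ v) (s + 1) (by simp; linarith)
    refine h.congr_fun (fun t ht => ?_) measurableSet_Ioi
    simp [SchwartzMap.derivCLM_apply, add_sub_cancel_right]
  have key : (∫ t in Set.Ioi (0:ℝ),
      (s * ((t : ℂ) ^ (s - 1) * v t) + (t : ℂ) ^ s * deriv (fun x : ℝ => v x) t)) = 0 := by
    have h0 : ((0:ℝ) : ℂ) ^ s * v 0 = 0 := by
      simp [Complex.zero_cpow hs0]
    have hcont : ContinuousWithinAt (fun t : ℝ => (t : ℂ) ^ s * v t) (Set.Ici (0:ℝ)) 0 := by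
      unfold ContinuousWithinAt
      have hv : (fun t : ℝ => (t : ℂ) ^ s * v t) 0 = 0 := by simpa using h0
      rw [hv]
      exact tendsto_cpow_mul_zero v s hs
    have := integral_Ioi_of_hasDerivAt_of_tendsto (a := (0:ℝ))
      (f := fun t : ℝ => (t : ℂ) ^ s * v t)
      (f' := fun t : ℝ => s * ((t : ℂ) ^ (s - 1) * v t) + (t : ℂ) ^ s * deriv (fun x : ℝ => v x) t)
      hcont
      (fun t ht => by simpa [mul_assoc] using hasDerivAt_cpow_mul v s ht)
      (hint1.add hint2)
      (tendsto_cpow_mul_atTop v s)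
    rw [this]
    simpa using h0
  rw [integral_add hint1 hint2] at key
  have e1 : (∫ t in Set.Ioi (0:ℝ), s * ((t : ℂ) ^ (s - 1) * v t))
      = s * mellin (fun t : ℝ => v t) s := by
    rw [integral_const_mul]; rfl
  have e2 : (∫ t in Set.Ioi (0:ℝ), (t : ℂ) ^ s * deriv (fun x : ℝ => v x) t)
      = mellin (fun t : ℝ => SchwartzMap.derivCLM ℝ ℂ v t) (s + 1) := by
    rw [mellin]
    refine setIntegral_congr_fun measurableSet_Ioi (fun t ht => ?_)
    simp [SchwartzMap.derivCLM_apply, add_sub_cancel_right]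
  rw [e1, e2] at key
  linear_combination key

lemma schwartz_tendsto_atTop (v : SchwartzMap ℝ ℂ) :
    Tendsto (fun t : ℝ => v t) atTop (𝓝 0) := by
  have := tendsto_cpow_mul_atTop v 0
  simpa using this

lemma mellin_derivCLM_one (v : SchwartzMap ℝ ℂ) :
    mellin (fun t : ℝ => SchwartzMap.derivCLM ℝ ℂ v t) 1 = -v 0 := by
  have hint : IntegrableOn (fun t : ℝ => deriv (fun x : ℝ => v x) t) (Set.Ioi (0:ℝ)) := by
    refine ((SchwartzMap.derivCLM ℝ ℂ v).integrable).integrableOn.congr_fun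
      (fun t _ => ?_) measurableSet_Ioi
    simp [SchwartzMap.derivCLM_apply]
  have := integral_Ioi_of_hasDerivAt_of_tendsto (a := (0:ℝ))
    (f := fun t : ℝ => v t) (f' := fun t : ℝ => deriv (fun x : ℝ => v x) t)
    (v.continuous.continuousAt.continuousWithinAt)
    (fun t _ => v.differentiableAt.hasDerivAt)
    hint (schwartz_tendsto_atTop v)
  rw [mellin]
  have e : (∫ t in Set.Ioi (0:ℝ), (t:ℂ) ^ ((1:ℂ) - 1) • SchwartzMap.derivCLM ℝ ℂ v t)
      = ∫ t in Set.Ioi (0:ℝ), deriv (fun x : ℝ => v x) t := by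
    refine setIntegral_congr_fun measurableSet_Ioi (fun t ht => ?_)
    simp [SchwartzMap.derivCLM_apply]
  rw [e, this, zero_sub]

noncomputable def Dn (u : SchwartzMap ℝ ℂ) : ℕ → SchwartzMap ℝ ℂ
  | 0 => u
  | n + 1 => SchwartzMap.derivCLM ℝ ℂ (Dn u n)

lemma Dn_apply (u : SchwartzMap ℝ ℂ) :
    ∀ n, (fun x => Dn u n x) = iteratedDeriv n (fun x : ℝ => u x) := by
  intro n
  induction n with
  | zero => simp [Dn, iteratedDeriv_zero]
  | succ n ih =>
    funext x
    rw [iteratedDeriv_succ, ← ih]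
    simp [Dn, SchwartzMap.derivCLM_apply]

lemma melliniter (u : SchwartzMap ℝ ℂ) (N : ℕ) (s : ℂ) (hs : 0 < s.re) :
    mellin (fun t : ℝ => Dn u N t) (s + N)
      = (-1) ^ N * (∏ k ∈ Finset.range N, (s + k)) * mellin (fun t : ℝ => u t) s := by
  induction N with
  | zero => simp [Dn]
  | succ N ih =>
    have harg : s + ((N:ℂ) + 1) = (s + N) + 1 := by ring
    have hre : 0 < (s + N).re := by simp; positivity
    have step := mellin_deriv_eq (Dn u N) (s + N) hre
    have : mellin (fun t : ℝ => Dn u (N+1) t) (s + ((N+1:ℕ):ℂ))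
        = -(s + N) * mellin (fun t : ℝ => Dn u N t) (s + N) := by
      rw [show s + ((N+1:ℕ):ℂ) = (s + N) + 1 from by push_cast; ring]
      exact step
    rw [this, ih, Finset.prod_range_succ]
    ring

noncomputable def FN (u : SchwartzMap ℝ ℂ) (N : ℕ) (z : ℂ) : ℂ :=
  (-1) ^ N * mellin (fun t : ℝ => Dn u N t) (z + N) / ∏ k ∈ Finset.range N, (z + k)

lemma FN_succ (u : SchwartzMap ℝ ℂ) (N : ℕ) (z : ℂ) (hz : -(N:ℝ) < z.re) :
    FN u (N + 1) z = FN u N z := by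
  have hre : 0 < (z + N).re := by simp; linarith
  have hzN : z + (N:ℂ) ≠ 0 := fun h => by rw [h] at hre; simp at hre
  have step : mellin (fun t : ℝ => Dn u (N+1) t) (z + ((N+1:ℕ):ℂ))
      = -(z + N) * mellin (fun t : ℝ => Dn u N t) (z + N) := by
    rw [show z + ((N+1:ℕ):ℂ) = (z + N) + 1 from by push_cast; ring]
    exact mellin_deriv_eq (Dn u N) (z + N) hre
  rw [FN, FN, step, Finset.prod_range_succ]
  rw [show (-1:ℂ) ^ (N+1) * (-(z + N) * mellin (fun t : ℝ => Dn u N t) (z + N))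
      = ((-1) ^ N * mellin (fun t : ℝ => Dn u N t) (z + N)) * (z + N) from by ring]
  exact mul_div_mul_right _ _ hzN

lemma FN_ge (u : SchwartzMap ℝ ℂ) {N M : ℕ} (h : N ≤ M) (z : ℂ) (hz : -(N:ℝ) < z.re) :
    FN u M z = FN u N z := by
  induction M, h using Nat.le_induction with
  | base => rfl
  | succ M hNM ih =>
    rw [FN_succ u M z (lt_of_le_of_lt (by exact_mod_cast neg_le_neg (Nat.cast_le.mpr hNM)) hz),
      ih]

noncomputable def Fmer (u : SchwartzMap ℝ ℂ) (z : ℂ) : ℂ := FN u (⌈-z.re⌉₊ + 1) z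

lemma ceil_lt (z : ℂ) : -((⌈-z.re⌉₊ + 1 : ℕ) : ℝ) < z.re := by
  have := Nat.le_ceil (-z.re)
  push_cast
  linarith

lemma F_eq_FN (u : SchwartzMap ℝ ℂ) (N : ℕ) (z : ℂ) (hz : -(N:ℝ) < z.re) :
    Fmer u z = FN u N z := by
  rw [Fmer, ← FN_ge u (le_max_left (⌈-z.re⌉₊ + 1) N) z (ceil_lt z),
    FN_ge u (le_max_right (⌈-z.re⌉₊ + 1) N) z hz]

lemma FN_diffAt (u : SchwartzMap ℝ ℂ) (N : ℕ) (z : ℂ) (hz : -(N:ℝ) < z.re)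
    (hp : ∀ k ∈ Finset.range N, z + (k:ℂ) ≠ 0) :
    DifferentiableAt ℂ (FN u N) z := by
  have h1 : DifferentiableAt ℂ (fun w : ℂ => mellin (fun t : ℝ => Dn u N t) (w + N)) z := by
    have hre : 0 < (z + N).re := by simp; linarith
    exact (mellinDiff (Dn u N) (z + N) hre).comp z (f := fun w : ℂ => w + (N:ℂ)) (differentiableAt_id.add_const _)
  have h2 : DifferentiableAt ℂ (fun w : ℂ => ∏ k ∈ Finset.range N, (w + (k:ℂ))) z :=
    DifferentiableAt.fun_finsetProd (fun k _ => differentiableAt_id.add_const _)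
  have h3 : (∏ k ∈ Finset.range N, (z + (k:ℂ))) ≠ 0 := Finset.prod_ne_zero_iff.mpr hp
  exact ((h1.const_mul _).div h2 h3)

lemma prod_neg_nat (j : ℕ) :
    (∏ k ∈ Finset.range j, ((k:ℂ) - j)) = (-1) ^ j * (j.factorial : ℂ) := by
  induction j with
  | zero => simp
  | succ n ih =>
    rw [Finset.prod_range_succ']
    have h : ∀ k ∈ Finset.range n, ((k+1:ℕ):ℂ) - ((n+1:ℕ):ℂ) = (k:ℂ) - n := by
      intro k _; push_cast; ring
    rw [Finset.prod_congr rfl h, ih, Nat.factorial_succ]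
    push_cast
    ring

lemma residue_part (u : SchwartzMap ℝ ℂ) (j : ℕ) : ∃ ε : ℝ, 0 < ε ∧ ∃ G : ℂ → ℂ,
    (∀ z ∈ Metric.ball (-(j : ℂ)) ε, DifferentiableAt ℂ G z) ∧
    ∀ z ∈ Metric.ball (-(j : ℂ)) ε, z ≠ -(j : ℂ) →
      G z = Fmer u z -
        (iteratedDeriv j (fun x : ℝ => u x) 0 / (j.factorial : ℂ)) * (z + (j : ℂ))⁻¹ := by
  set a : ℂ := iteratedDeriv j (fun x : ℝ => u x) 0 / (j.factorial : ℂ) with ha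
  set d : ℂ := iteratedDeriv j (fun x : ℝ => u x) 0 with hd
  set h : ℂ → ℂ := fun z =>
    (-1) ^ (j+1) * mellin (fun t : ℝ => Dn u (j+1) t) (z + ((j+1:ℕ):ℂ))
      - a * ∏ k ∈ Finset.range j, (z + k) with hh
  set S : Set ℂ := {z : ℂ | -((j:ℝ) + 1) < z.re} with hS
  have hSopen : IsOpen S := by
    have : S = Complex.re ⁻¹' Set.Ioi (-((j:ℝ)+1)) := rfl
    rw [this]; exact (Complex.continuous_re).isOpen_preimage _ isOpen_Ioi
  have hdiffS : ∀ z ∈ S, DifferentiableAt ℂ h z := by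
    intro z hz
    have hre : 0 < (z + ((j+1:ℕ):ℂ)).re := by
      simp only [Complex.add_re, Complex.natCast_re] at *
      have : -((j:ℝ)+1) < z.re := hz
      push_cast
      linarith
    have h1 : DifferentiableAt ℂ
        (fun w : ℂ => mellin (fun t : ℝ => Dn u (j+1) t) (w + ((j+1:ℕ):ℂ))) z :=
      (mellinDiff (Dn u (j+1)) _ hre).comp z (f := fun w : ℂ => w + ((j+1:ℕ):ℂ)) (differentiableAt_id.add_const _)
    have h2 : DifferentiableAt ℂ (fun w : ℂ => ∏ k ∈ Finset.range j, (w + (k:ℂ))) z :=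
      DifferentiableAt.fun_finsetProd (fun k _ => differentiableAt_id.add_const _)
    exact (h1.const_mul _).sub (h2.const_mul _)
  have hmem : -(j:ℂ) ∈ S := by
    simp only [hS, Set.mem_setOf_eq, Complex.neg_re, Complex.natCast_re]
    linarith
  have hzero : h (-(j:ℂ)) = 0 := by
    have harg : -(j:ℂ) + ((j+1:ℕ):ℂ) = 1 := by push_cast; ring
    have hm : mellin (fun t : ℝ => Dn u (j+1) t) (-(j:ℂ) + ((j+1:ℕ):ℂ)) = -d := by
      rw [harg, show Dn u (j+1) = SchwartzMap.derivCLM ℝ ℂ (Dn u j) from rfl,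
        mellin_derivCLM_one, hd, ← Dn_apply u j]
    have hprod : (∏ k ∈ Finset.range j, (-(j:ℂ) + k)) = (-1) ^ j * (j.factorial : ℂ) := by
      rw [← prod_neg_nat j]
      exact Finset.prod_congr rfl (fun k _ => by ring)
    have hfact : (j.factorial : ℂ) ≠ 0 := by
      exact_mod_cast Nat.cast_ne_zero.mpr j.factorial_ne_zero
    rw [hh]
    simp only [hm, hprod, ha]
    field_simp
    ring
  have hdOn : DifferentiableOn ℂ h S := fun z hz => (hdiffS z hz).differentiableWithinAt
  have hanalytic : AnalyticAt ℂ h (-(j:ℂ)) := hdOn.analyticAt (hSopen.mem_nhds hmem)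
  obtain ⟨p, hp⟩ := hanalytic
  have hdslope0 : DifferentiableAt ℂ (dslope h (-(j:ℂ))) (-(j:ℂ)) :=
    hp.has_fpower_series_dslope_fslope.analyticAt.differentiableAt
  refine ⟨1/2, by norm_num, fun z => dslope h (-(j:ℂ)) z / ∏ k ∈ Finset.range j, (z + k),
    ?_, ?_⟩
  · intro z hz
    have hball : ‖z + j‖ < 1/2 := by
      have := hz
      rw [Metric.mem_ball, Complex.dist_eq, sub_neg_eq_add] at this
      exact this
    have hzS : z ∈ S := by
      have := Complex.abs_re_le_norm (z + j)
      simp only [Complex.add_re, Complex.natCast_re] at this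
      have := abs_le.mp (le_trans this hball.le)
      simp only [hS, Set.mem_setOf_eq]
      linarith [this.1]
    have hprodne : (∏ k ∈ Finset.range j, (z + (k:ℂ))) ≠ 0 := by
      refine Finset.prod_ne_zero_iff.mpr (fun k hk => ?_)
      intro hzk
      have hzk' : z = -(k:ℂ) := by linear_combination hzk
      rw [hzk'] at hball
      have : ‖-(k:ℂ) + j‖ = |(j:ℝ) - k| := by
        rw [show -(k:ℂ) + j = (((j:ℝ) - k : ℝ) : ℂ) from by push_cast; ring,
          Complex.norm_real, Real.norm_eq_abs]
      rw [this] at hball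
      have hkj : k < j := Finset.mem_range.mp hk
      have hjk : (k:ℝ) + 1 ≤ j := by exact_mod_cast hkj
      have : (1:ℝ) ≤ |(j:ℝ) - k| := by
        rw [_root_.abs_of_nonneg (by linarith)]; linarith
      linarith
    have hnum : DifferentiableAt ℂ (dslope h (-(j:ℂ))) z := by
      rcases eq_or_ne z (-(j:ℂ)) with rfl | hne
      · exact hdslope0
      · exact (differentiableAt_dslope_of_ne hne).mpr (hdiffS z hzS)
    exact hnum.div (DifferentiableAt.fun_finsetProd (fun k _ => differentiableAt_id.add_const _))
      hprodne
  · intro z hz hne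
    have hball : ‖z + j‖ < 1/2 := by
      rw [Metric.mem_ball, Complex.dist_eq, sub_neg_eq_add] at hz
      exact hz
    have hzre : -(((j+1:ℕ)):ℝ) < z.re := by
      have := Complex.abs_re_le_norm (z + j)
      simp only [Complex.add_re, Complex.natCast_re] at this
      have := abs_le.mp (le_trans this hball.le)
      push_cast
      linarith [this.1]
    have hzj : z + (j:ℂ) ≠ 0 := fun h0 => hne (by linear_combination h0)
    have hprodne : (∏ k ∈ Finset.range j, (z + (k:ℂ))) ≠ 0 := by
      refine Finset.prod_ne_zero_iff.mpr (fun k hk => ?_)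
      intro hzk
      have hzk' : z = -(k:ℂ) := by linear_combination hzk
      rw [hzk'] at hball
      have heq : ‖-(k:ℂ) + j‖ = |(j:ℝ) - k| := by
        rw [show -(k:ℂ) + j = (((j:ℝ) - k : ℝ) : ℂ) from by push_cast; ring,
          Complex.norm_real, Real.norm_eq_abs]
      rw [heq] at hball
      have hkj : k < j := Finset.mem_range.mp hk
      have hjk : (k:ℝ) + 1 ≤ j := by exact_mod_cast hkj
      have : (1:ℝ) ≤ |(j:ℝ) - k| := by
        rw [_root_.abs_of_nonneg (by linarith)]; linarith
      linarith
    rw [F_eq_FN u (j+1) z hzre]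
    have hds : dslope h (-(j:ℂ)) z = (z + j)⁻¹ * h z := by
      rw [dslope_of_ne h hne, slope_def_field, hzero, sub_zero, sub_neg_eq_add,
        div_eq_inv_mul]
    show dslope h (-(j:ℂ)) z / ∏ k ∈ Finset.range j, (z + (k:ℂ)) = _
    rw [hds, FN, Finset.prod_range_succ, hh]
    field_simp

lemma mellin_norm_le (v : SchwartzMap ℝ ℂ) (w : ℂ) :
    ‖mellin (fun t : ℝ => v t) w‖ ≤ ∫ t in Set.Ioi (0:ℝ), t ^ (w.re - 1) * ‖v t‖ := by
  rw [mellin]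
  refine (norm_integral_le_integral_norm _).trans (le_of_eq ?_)
  refine setIntegral_congr_fun measurableSet_Ioi (fun t ht => ?_)
  rw [norm_smul, Complex.norm_cpow_eq_rpow_re_of_pos ht,
    Complex.sub_re, Complex.one_re]

lemma vertical_decay (u : SchwartzMap ℝ ℂ) (c : ℝ) (hc : 0 < c) (m : ℕ) :
    ∃ B : ℝ, ∀ η : ℝ,
      (1 + |η|) ^ m * ‖mellin (fun t : ℝ => u t) ((c:ℂ) + Complex.I * η)‖ ≤ B := by
  set C : ℝ := ∫ t in Set.Ioi (0:ℝ), t ^ ((c + m) - 1) * ‖Dn u m t‖ with hC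
  refine ⟨(1 + 1/c) ^ m * C, fun η => ?_⟩
  set s : ℂ := (c:ℂ) + Complex.I * η with hs
  have hsre : s.re = c := by simp [hs]
  have hsim : s.im = η := by simp [hs]
  have hspos : 0 < s.re := by rw [hsre]; exact hc
  have hMre : (s + (m:ℂ)).re = c + m := by simp [hsre]
  have hmle : ‖mellin (fun t : ℝ => Dn u m t) (s + m)‖ ≤ C := by
    have := mellin_norm_le (Dn u m) (s + m)
    rw [hMre] at this
    exact this
  have hiter := melliniter u m s hspos
  have habs : (∏ k ∈ Finset.range m, ‖s + k‖) *
      ‖mellin (fun t : ℝ => u t) s‖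
      = ‖mellin (fun t : ℝ => Dn u m t) (s + m)‖ := by
    rw [hiter, norm_mul, norm_mul, norm_pow, norm_prod]
    simp [map_neg_eq_map]
  have hfac : ∀ k : ℕ, (1 + |η|) ≤ (1 + 1/c) * ‖s + k‖ := by
    intro k
    have h1 : c ≤ ‖s + k‖ := by
      have := Complex.abs_re_le_norm (s + k)
      have hre : (s + (k:ℂ)).re = c + k := by simp [hsre]
      rw [hre, _root_.abs_of_nonneg (by positivity)] at this
      have : c + k ≤ ‖s + k‖ := this
      have hk : (0:ℝ) ≤ k := Nat.cast_nonneg k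
      linarith
    have h2 : |η| ≤ ‖s + k‖ := by
      have := Complex.abs_im_le_norm (s + k)
      have him : (s + (k:ℂ)).im = η := by simp [hsim]
      rwa [him] at this
    have hd : 1 ≤ ‖s + k‖ / c := (one_le_div hc).mpr h1
    calc 1 + |η| ≤ ‖s + k‖ / c + ‖s + k‖ := by linarith
      _ = (1 + 1/c) * ‖s + k‖ := by field_simp; ring
  have hpow : (1 + |η|) ^ m ≤ (1 + 1/c) ^ m * ∏ k ∈ Finset.range m, ‖s + k‖ := by
    have h1 : (1 + |η|) ^ m = ∏ _k ∈ Finset.range m, (1 + |η|) := by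
      rw [Finset.prod_const, Finset.card_range]
    have h2 : (∏ k ∈ Finset.range m, ((1 + 1/c) * ‖s + k‖))
        = (1 + 1/c) ^ m * ∏ k ∈ Finset.range m, ‖s + k‖ := by
      rw [Finset.prod_mul_distrib, Finset.prod_const, Finset.card_range]
    rw [h1, ← h2]
    exact Finset.prod_le_prod (fun k _ => by positivity) (fun k _ => hfac k)
  calc (1 + |η|) ^ m * ‖mellin (fun t : ℝ => u t) s‖
      ≤ ((1 + 1/c) ^ m * ∏ k ∈ Finset.range m, ‖s + k‖) *
        ‖mellin (fun t : ℝ => u t) s‖ :=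
        mul_le_mul_of_nonneg_right hpow (norm_nonneg _)
    _ = (1 + 1/c) ^ m * ((∏ k ∈ Finset.range m, ‖s + k‖) *
        ‖mellin (fun t : ℝ => u t) s‖) := by ring
    _ ≤ (1 + 1/c) ^ m * C := by
        refine mul_le_mul_of_nonneg_left ?_ (by positivity)
        rw [habs]; exact hmle

end MellinPW

/-- Paley-Wiener for the Mellin transform of Schwartz functions restricted to `(0,∞)`:
the transform converges absolutely and is analytic on `Re s > 0`, extends meromorphically
to `ℂ` with at most simple poles at `-j` of residue `ũ^{(j)}(0)/j!`, and is rapidly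
decreasing on vertical lines. -/
theorem mellin_paleyWiener_schwartz (u : SchwartzMap ℝ ℂ) :
    (∀ s : ℂ, 0 < s.re →
        IntegrableOn (fun t : ℝ => (t : ℂ) ^ (s - 1) * u t) (Set.Ioi (0 : ℝ))) ∧
    (∀ s : ℂ, 0 < s.re →
        DifferentiableAt ℂ (fun z : ℂ => mellin (fun t : ℝ => u t) z) s) ∧
    (∃ F : ℂ → ℂ,
      (∀ s : ℂ, (∀ j : ℕ, s ≠ -(j : ℂ)) → DifferentiableAt ℂ F s) ∧
      (∀ s : ℂ, 0 < s.re → F s = mellin (fun t : ℝ => u t) s) ∧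
      ∀ j : ℕ, ∃ ε : ℝ, 0 < ε ∧ ∃ G : ℂ → ℂ,
        (∀ z ∈ Metric.ball (-(j : ℂ)) ε, DifferentiableAt ℂ G z) ∧
        ∀ z ∈ Metric.ball (-(j : ℂ)) ε, z ≠ -(j : ℂ) →
          G z = F z - (iteratedDeriv j (fun x : ℝ => u x) 0 / (j.factorial : ℂ)) *
            (z + (j : ℂ))⁻¹) ∧
    ∀ c : ℝ, 0 < c → ∀ m : ℕ, ∃ B : ℝ, ∀ η : ℝ,
      (1 + |η|) ^ m * ‖mellin (fun t : ℝ => u t) (c + Complex.I * η)‖ ≤ B := by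
  refine ⟨fun s hs => MellinPW.mellinIntegrable u s hs,
    fun s hs => MellinPW.mellinDiff u s hs,
    ⟨MellinPW.Fmer u, ?_, ?_, fun j => MellinPW.residue_part u j⟩,
    fun c hc m => MellinPW.vertical_decay u c hc m⟩
  · intro s hsj
    set N : ℕ := ⌈-s.re⌉₊ + 1 with hN
    have hz : -(N:ℝ) < s.re := MellinPW.ceil_lt s
    have hp : ∀ k ∈ Finset.range N, s + (k:ℂ) ≠ 0 := by
      intro k _ h0
      exact hsj k (by linear_combination h0)
    have hdiff : DifferentiableAt ℂ (MellinPW.FN u N) s := MellinPW.FN_diffAt u N s hz hp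
    have hopen : IsOpen {w : ℂ | -(N:ℝ) < w.re} :=
      (Complex.continuous_re).isOpen_preimage _ isOpen_Ioi
    have hEq : MellinPW.Fmer u =ᶠ[nhds s] MellinPW.FN u N := by
      filter_upwards [hopen.mem_nhds hz] with w hw
      exact MellinPW.F_eq_FN u N w hw
    exact hEq.differentiableAt_iff.mpr hdiff
  · intro s hs
    rw [MellinPW.F_eq_FN u 0 s (by simpa using hs)]
    simp [MellinPW.FN, MellinPW.Dn]
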